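/- Let R be a nonzero commutative ring and M a nontrivial finitely generated cancellable torsionfree commutative monoid, so that the monoid algebra over any field is a domain. Then the morphism Spec(R[M]) → Spec(R) is surjective with irreducible fibers, and it induces mutually inverse bijections between the irreducible components of Spec(R) and those of Spec(R[M]), given by taking preimage and image respectively. -/

import Mathlib

open AddMonoidAlgebra

/-! ### The Grothendieck group of a cancellative commutative monoid -/

section Grothendieck

variable {M : Type*} [AddCancelCommMonoid M]

private abbrev GG (M : Type*) [AddCancelCommMonoid M] : Type _ :=
  AddLocalization (⊤ : AddSubmonoid M)

private def gneg (x : GG M) : GG M :=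
  AddLocalization.liftOn x (fun a b => AddLocalization.mk (b : M) ⟨a, AddSubmonoid.mem_top a⟩) (by
    intro a c b d h
    rw [← AddLocalization.mk_eq_mk_iff] at h
    rw [AddLocalization.mk_eq_mk_iff'] at h ⊢
    simp only [AddSubmonoid.mk_add_mk] at *
    calc (c : M) + (b : M) = (b : M) + c := add_comm _ _
    _ = (d:M) + a := h.symm
    _ = a + (d : M) := add_comm _ _)

private theorem gneg_mk (a : M) (b : (⊤ : AddSubmonoid M)) :
    gneg (AddLocalization.mk a b) = AddLocalization.mk (b : M) ⟨a, AddSubmonoid.mem_top a⟩ :=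
  AddLocalization.liftOn_mk _ _ _ _

private instance : Neg (GG M) := ⟨gneg⟩

private instance : AddCommGroup (GG M) :=
  { (inferInstance : AddCommMonoid (GG M)) with
    neg := gneg
    zsmul := zsmulRec
    neg_add_cancel := by
      refine AddLocalization.ind fun y => ?_
      obtain ⟨a, b⟩ := y
      show gneg (AddLocalization.mk a b) + AddLocalization.mk a b = 0
      rw [gneg_mk, AddLocalization.mk_add, ← AddLocalization.mk_zero,
        AddLocalization.mk_eq_mk_iff']
      simp [add_comm] }

private def gi : M →+ GG M where
  toFun a := AddLocalization.mk a 0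
  map_zero' := AddLocalization.mk_zero
  map_add' a b := by rw [AddLocalization.mk_add, add_zero]

private theorem gi_injective : Function.Injective (gi (M := M)) :=
  AddLocalization.mk_left_injective 0

private theorem gmk_eq_sub (a : M) (b : (⊤ : AddSubmonoid M)) :
    AddLocalization.mk a b = gi a - gi (b : M) := by
  rw [eq_sub_iff_add_eq]
  show AddLocalization.mk a b + AddLocalization.mk (b : M) 0 = AddLocalization.mk a 0
  rw [AddLocalization.mk_add, AddLocalization.mk_eq_mk_iff']
  simp [add_comm]

private theorem gnsmul_mk (n : ℕ) (a : M) (b : (⊤ : AddSubmonoid M)) :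
    n • AddLocalization.mk a b = AddLocalization.mk (n • a) (n • b) := by
  induction n with
  | zero => simp [← AddLocalization.mk_zero]
  | succ n ih =>
      rw [succ_nsmul, ih, AddLocalization.mk_add, succ_nsmul, succ_nsmul]

private theorem gg_noZeroSMulDivisors
    (htf : ∀ (r : ℕ) (m n : M), r ≠ 0 → r • m = r • n → m = n) :
    NoZeroSMulDivisors ℤ (GG M) := by
  have key : ∀ (n : ℕ), n ≠ 0 → ∀ x : GG M, n • x = 0 → x = 0 := by
    intro n hn x
    induction x using AddLocalization.ind with
    | _ y =>
      obtain ⟨a, b⟩ := y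
      intro h
      rw [gnsmul_mk, ← AddLocalization.mk_zero, AddLocalization.mk_eq_mk_iff'] at h
      rw [← AddLocalization.mk_zero, AddLocalization.mk_eq_mk_iff']
      simp only [ZeroMemClass.coe_zero, zero_add, add_zero] at h ⊢
      have hb : ((n • b : (⊤ : AddSubmonoid M)) : M) = n • (b : M) := rfl
      rw [hb] at h
      exact htf n a (b : M) hn h
  constructor
  intro z x h
  rcases eq_or_ne z 0 with hz | hz
  · exact Or.inl hz
  · right
    have hn : z.natAbs ≠ 0 := Int.natAbs_ne_zero.mpr hz
    refine key z.natAbs hn x ?_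
    rcases Int.natAbs_eq z with he | he
    · rw [he] at h; rwa [natCast_zsmul] at h
    · rw [he] at h
      rw [neg_zsmul, neg_eq_zero] at h
      rwa [natCast_zsmul] at h

private theorem gg_finite (hfg : AddMonoid.FG M) : Module.Finite ℤ (GG M) := by
  classical
  obtain ⟨S, hS⟩ := hfg.fg_top
  refine ⟨⟨S.image gi, ?_⟩⟩
  have hin : ∀ a : M, gi a ∈ Submodule.span ℤ ((S.image gi : Finset (GG M)) : Set (GG M)) := by
    intro a
    have ha : a ∈ AddSubmonoid.closure (S : Set M) := hS ▸ AddSubmonoid.mem_top a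
    induction ha using AddSubmonoid.closure_induction with
    | mem x hx => exact Submodule.subset_span (by simpa using ⟨x, hx, rfl⟩)
    | zero => rw [map_zero]; exact zero_mem _
    | add x y hx hy ihx ihy => rw [map_add]; exact add_mem ihx ihy
  rw [eq_top_iff]
  rintro x -
  induction x using AddLocalization.ind with
  | _ y =>
    obtain ⟨a, b⟩ := y
    rw [gmk_eq_sub]
    exact sub_mem (hin a) (hin (b : M))

private theorem uniqueSums_of_fg_torsionfree (hfg : AddMonoid.FG M)
    (htf : ∀ (r : ℕ) (m n : M), r ≠ 0 → r • m = r • n → m = n) : UniqueSums M := by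
  haveI := gg_noZeroSMulDivisors htf
  haveI := gg_finite (M := M) hfg
  haveI : Module.Free ℤ (GG M) := Module.free_of_finite_type_torsion_free'
  let b := Module.Free.chooseBasis ℤ (GG M)
  have h1 : UniqueSums (GG M) :=
    UniqueSums.of_injective_addHom b.repr.toLinearMap.toAddMonoidHom.toAddHom
      b.repr.injective inferInstance
  exact UniqueSums.of_injective_addHom gi.toAddHom gi_injective h1

end Grothendieck

/-! ### The kernel of `R[M] → (R/p)[M]` -/

section Alg

variable {R : Type*} [CommRing R] {M : Type*} [AddCancelCommMonoid M]

private noncomputable def phi (p : Ideal R) :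
    AddMonoidAlgebra R M →+* AddMonoidAlgebra (R ⧸ p) M :=
  AddMonoidAlgebra.liftNCRingHom
    (AddMonoidAlgebra.singleZeroRingHom.comp (Ideal.Quotient.mk p))
    (AddMonoidAlgebra.of (R ⧸ p) M)
    (fun _ _ => Commute.all _ _)

private theorem phi_single (p : Ideal R) (m : M) (r : R) :
    phi p (AddMonoidAlgebra.single m r) = AddMonoidAlgebra.single m (Ideal.Quotient.mk p r) := by
  show AddMonoidAlgebra.liftNC _ _ _ = _
  rw [AddMonoidAlgebra.liftNC_single]
  show AddMonoidAlgebra.single 0 (Ideal.Quotient.mk p r) *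
    AddMonoidAlgebra.single m (1 : R ⧸ p) = _
  rw [AddMonoidAlgebra.single_mul_single, zero_add, mul_one]

private theorem phi_apply (p : Ideal R) (f : AddMonoidAlgebra R M) (m : M) :
    (phi p f).coeff m = Ideal.Quotient.mk p (f.coeff m) := by
  induction f using AddMonoidAlgebra.induction_linear with
  | zero => simp
  | add f g hf hg => rw [map_add, AddMonoidAlgebra.coeff_add, AddMonoidAlgebra.coeff_add,
      Finsupp.add_apply, Finsupp.add_apply, hf, hg, map_add]
  | single a r =>
    classical
    rw [phi_single, AddMonoidAlgebra.coeff_single, AddMonoidAlgebra.coeff_single,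
      Finsupp.single_apply, Finsupp.single_apply]
    split_ifs <;> simp

private theorem phi_algebraMap (p : Ideal R) (r : R) :
    phi p (algebraMap R (AddMonoidAlgebra R M) r) =
      AddMonoidAlgebra.single 0 (Ideal.Quotient.mk p r) := by
  have : algebraMap R (AddMonoidAlgebra R M) r = AddMonoidAlgebra.single 0 r := by
    rw [AddMonoidAlgebra.coe_algebraMap]; simp
  rw [this, phi_single]

private theorem ker_phi_comap (p : Ideal R) :
    (RingHom.ker (phi p (M := M))).comap (algebraMap R (AddMonoidAlgebra R M)) = p := by
  ext r
  rw [Ideal.mem_comap, RingHom.mem_ker, phi_algebraMap, AddMonoidAlgebra.single_eq_zero,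
    Ideal.Quotient.eq_zero_iff_mem]

private theorem ker_phi_eq_map (p : Ideal R) :
    RingHom.ker (phi p (M := M)) = p.map (algebraMap R (AddMonoidAlgebra R M)) := by
  refine le_antisymm ?_ (Ideal.map_le_iff_le_comap.mpr (by rw [ker_phi_comap]))
  intro f hf
  have hco : ∀ m, f.coeff m ∈ p := by
    intro m
    have := congrArg (fun g => g.coeff m) (RingHom.mem_ker.mp hf)
    simp only [phi_apply, AddMonoidAlgebra.coeff_zero, Finsupp.coe_zero, Pi.zero_apply] at this
    rwa [← Ideal.Quotient.eq_zero_iff_mem]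
  clear hf
  induction f using AddMonoidAlgebra.induction with
  | zero => exact zero_mem _
  | single_add a b f ha hb ih =>
    have hfa : f.coeff a = 0 := Finsupp.notMem_support_iff.mp ha
    have hb' : b ∈ p := by
      have := hco a
      simpa [AddMonoidAlgebra.coeff_add, AddMonoidAlgebra.coeff_single, hfa] using this
    have hrest : ∀ m, f.coeff m ∈ p := by
      intro m
      rcases eq_or_ne m a with rfl | hma
      · simp only [hfa]; exact p.zero_mem
      · have := hco m
        simpa [AddMonoidAlgebra.coeff_add, AddMonoidAlgebra.coeff_single, Finsupp.single_apply, Ne.symm hma] using this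
    refine add_mem ?_ (ih hrest)
    have hmem : algebraMap R (AddMonoidAlgebra R M) b * AddMonoidAlgebra.single a 1 ∈
        p.map (algebraMap R (AddMonoidAlgebra R M)) :=
      Ideal.mul_mem_right _ _ (Ideal.mem_map_of_mem _ hb')
    convert hmem using 2
    have h0 : algebraMap R (AddMonoidAlgebra R M) b = AddMonoidAlgebra.single 0 b := by
      rw [AddMonoidAlgebra.coe_algebraMap]; simp
    rw [h0, AddMonoidAlgebra.single_mul_single, zero_add, mul_one]

private theorem ker_phi_isPrime (p : Ideal R) [p.IsPrime] [UniqueSums M] :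
    (RingHom.ker (phi p (M := M))).IsPrime := by
  haveI : IsDomain (R ⧸ p) := Ideal.Quotient.isDomain p
  haveI : Nontrivial (AddMonoidAlgebra (R ⧸ p) M) :=
    inferInstance
  haveI : IsDomain (AddMonoidAlgebra (R ⧸ p) M) := NoZeroDivisors.to_isDomain _
  exact RingHom.ker_isPrime _

end Alg

/-! ### Irreducible components of a prime spectrum -/

private theorem mem_irreducibleComponents_iff_min {S : Type*} [CommRing S]
    (Z : Set (PrimeSpectrum S)) :
    Z ∈ irreducibleComponents (PrimeSpectrum S) ↔
      ∃ x : PrimeSpectrum S, (∀ y, y ≤ x → y = x) ∧ Z = closure {x} := by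
  rw [← PrimeSpectrum.zeroLocus_minimalPrimes]
  constructor
  · rintro ⟨I, hI, rfl⟩
    rw [minimalPrimes_eq_minimals] at hI
    refine ⟨⟨I, hI.1⟩, fun y hy => ?_, ?_⟩
    · exact PrimeSpectrum.ext (le_antisymm hy (hI.2 y.isPrime hy))
    · rw [PrimeSpectrum.closure_singleton]; rfl
  · rintro ⟨x, hx, rfl⟩
    refine ⟨x.asIdeal, ?_, ?_⟩
    · rw [minimalPrimes_eq_minimals]
      exact ⟨x.isPrime, fun J hJ hle => le_of_eq (congrArg PrimeSpectrum.asIdeal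
        (hx ⟨J, hJ⟩ hle)).symm⟩
    · rw [PrimeSpectrum.closure_singleton]; rfl

private theorem mem_closure_singleton_iff {S : Type*} [CommRing S]
    (x y : PrimeSpectrum S) : y ∈ closure ({x} : Set (PrimeSpectrum S)) ↔ x ≤ y := by
  rw [← specializes_iff_mem_closure, ← PrimeSpectrum.le_iff_specializes]

/-! ### Main theorem -/

/-- Let `R` be a nonzero commutative ring and `M` a nontrivial finitely generated
cancellable torsionfree commutative monoid (so that the monoid algebra over any field
is a domain).  Then the map `Spec R[M] → Spec R` is surjective with irreducible
fibres, and taking preimages and images under it induces mutually inverse bijections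
between the irreducible components of `Spec R` and those of `Spec R[M]`. -/
theorem monoidAlgebra_spec_irreducibleComponents
    (R : Type*) [CommRing R] [Nontrivial R]
    (M : Type*) [AddCancelCommMonoid M] [Nontrivial M] (hfg : AddMonoid.FG M)
    (htf : ∀ (r : ℕ) (m n : M), r ≠ 0 → r • m = r • n → m = n) :
    letI f := PrimeSpectrum.comap (algebraMap R (AddMonoidAlgebra R M))
    Function.Surjective f ∧
    (∀ p : PrimeSpectrum R, IsIrreducible (f ⁻¹' {p})) ∧
    (∀ Z ∈ irreducibleComponents (PrimeSpectrum R),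
        f ⁻¹' Z ∈ irreducibleComponents (PrimeSpectrum (AddMonoidAlgebra R M))) ∧
    (∀ Y ∈ irreducibleComponents (PrimeSpectrum (AddMonoidAlgebra R M)),
        f '' Y ∈ irreducibleComponents (PrimeSpectrum R)) ∧
    (∀ Z ∈ irreducibleComponents (PrimeSpectrum R), f '' (f ⁻¹' Z) = Z) ∧
    (∀ Y ∈ irreducibleComponents (PrimeSpectrum (AddMonoidAlgebra R M)),
        f ⁻¹' (f '' Y) = Y) := by
  haveI : UniqueSums M := uniqueSums_of_fg_torsionfree hfg htf
  set f := PrimeSpectrum.comap (algebraMap R (AddMonoidAlgebra R M)) with hf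
  -- the section on points
  let σ : PrimeSpectrum R → PrimeSpectrum (AddMonoidAlgebra R M) := fun p =>
    ⟨RingHom.ker (phi (M := M) p.asIdeal), by haveI := p.isPrime; exact ker_phi_isPrime (M := M) p.asIdeal⟩
  have h1 : ∀ p, f (σ p) = p := fun p => PrimeSpectrum.ext (ker_phi_comap (M := M) p.asIdeal)
  have h2 : ∀ p q, σ p ≤ q ↔ p ≤ f q := by
    intro p q
    rw [← PrimeSpectrum.asIdeal_le_asIdeal, ← PrimeSpectrum.asIdeal_le_asIdeal]
    show RingHom.ker (phi (M := M) p.asIdeal) ≤ q.asIdeal ↔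
      p.asIdeal ≤ q.asIdeal.comap (algebraMap R (AddMonoidAlgebra R M))
    rw [ker_phi_eq_map (M := M)]
    exact Ideal.map_le_iff_le_comap
  have hmono : Monotone f := fun q q' h => (PrimeSpectrum.asIdeal_le_asIdeal _ _).mp
    (Ideal.comap_mono ((PrimeSpectrum.asIdeal_le_asIdeal _ _).mpr h))
  -- minimality transfer
  have hminσ : ∀ p : PrimeSpectrum R, (∀ y, y ≤ p → y = p) → ∀ q, q ≤ σ p → q = σ p := by
    intro p hp q hq
    have : f q ≤ p := h1 p ▸ hmono hq
    have hfq : f q = p := hp _ this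
    exact le_antisymm hq ((h2 p q).mpr hfq.ge)
  have hminf : ∀ q : PrimeSpectrum (AddMonoidAlgebra R M),
      (∀ y, y ≤ q → y = q) → (∀ y, y ≤ f q → y = f q) ∧ q = σ (f q) := by
    intro q hq
    have hs : σ (f q) = q := hq _ ((h2 _ q).mpr le_rfl)
    refine ⟨?_, hs.symm⟩
    intro p' hp'
    have h3 : σ p' ≤ q := by rw [h2]; exact hp'
    have h4 := hq _ h3
    have h5 := congrArg f h4
    rw [h1] at h5
    exact h5
  -- preimage/image of closures
  have hpre : ∀ p : PrimeSpectrum R, f ⁻¹' (closure {p}) = closure {σ p} := by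
    intro p
    ext q
    rw [Set.mem_preimage, mem_closure_singleton_iff, mem_closure_singleton_iff, h2]
  have himg : ∀ p : PrimeSpectrum R, f '' (closure {σ p}) = closure {p} := by
    intro p
    ext p'
    constructor
    · rintro ⟨q, hq, rfl⟩
      rw [mem_closure_singleton_iff] at hq ⊢
      exact (h1 p) ▸ hmono hq
    · intro hp'
      rw [mem_closure_singleton_iff] at hp'
      refine ⟨σ p', ?_, h1 p'⟩
      rw [mem_closure_singleton_iff]
      exact (h2 p (σ p')).mpr (by rw [h1]; exact hp')
  refine ⟨fun p => ⟨σ p, h1 p⟩, ?_, ?_, ?_, ?_, ?_⟩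
  · -- irreducible fibres
    intro p
    have hsub : f ⁻¹' {p} ⊆ closure {σ p} := by
      intro q hq
      have hq' : f q = p := hq
      rw [mem_closure_singleton_iff]
      exact (h2 p q).mpr hq'.ge
    have hmem : σ p ∈ f ⁻¹' {p} := by simp [h1 p]
    have hcl : closure (f ⁻¹' {p}) = closure {σ p} :=
      le_antisymm (closure_minimal hsub isClosed_closure)
        (closure_mono (by simpa using hmem))
    rw [← isIrreducible_iff_closure, hcl, isIrreducible_iff_closure]
    exact isIrreducible_singleton
  · -- preimages of components
    intro Z hZ
    rw [mem_irreducibleComponents_iff_min] at hZ ⊢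
    obtain ⟨p, hp, rfl⟩ := hZ
    exact ⟨σ p, hminσ p hp, hpre p⟩
  · -- images of components
    intro Y hY
    rw [mem_irreducibleComponents_iff_min] at hY ⊢
    obtain ⟨q, hq, rfl⟩ := hY
    obtain ⟨hmin, hqs⟩ := hminf q hq
    refine ⟨f q, hmin, ?_⟩
    conv_lhs => rw [hqs]
    exact himg (f q)
  · -- f '' (f ⁻¹' Z) = Z
    intro Z hZ
    rw [mem_irreducibleComponents_iff_min] at hZ
    obtain ⟨p, hp, rfl⟩ := hZ
    rw [hpre p, himg p]
  · -- f ⁻¹' (f '' Y) = Y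
    intro Y hY
    rw [mem_irreducibleComponents_iff_min] at hY
    obtain ⟨q, hq, rfl⟩ := hY
    obtain ⟨hmin, hqs⟩ := hminf q hq
    conv_lhs => rw [hqs]
    rw [himg (f q), hpre (f q), ← hqs]
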